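/- Let X and Y be finite sets, u : X × Y → ℝ, and let γ be a probability distribution on X × Y with marginals ρ and φ. If γ is the unique maximizer of ∫ u dγ' over all probability distributions γ' on X × Y with marginals ρ and φ, then the support of γ is strictly u-cyclically monotone. -/

import Mathlib

/-- γ is a probability distribution on a finite type. -/
def IsDist {Z : Type*} [Fintype Z] (γ : Z → ℝ) : Prop :=
  (∀ z, 0 ≤ γ z) ∧ ∑ z, γ z = 1

/-- A set `S ⊆ X × Y` is strictly `u`-cyclically monotone. -/
def StrictCycMono {X Y : Type*} (u : X → Y → ℝ) (S : Set (X × Y)) : Prop :=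
  ∀ (N : ℕ) (x : Fin N → X) (y : Fin N → Y),
    (∀ i, (x i, y i) ∈ S) →
    ((List.ofFn fun i => (x i, y i)) : Multiset (X × Y)) ≠
      ((List.ofFn fun i => (x i, y (finRotate N i))) : Multiset (X × Y)) →
    ∑ i, u (x i) (y (finRotate N i)) < ∑ i, u (x i) (y i)

lemma cnt_ofFnM {α : Type*} [DecidableEq α] {n : ℕ} (g : Fin n → α) (a : α) :
    Multiset.count a ((List.ofFn g : List α) : Multiset α) = ∑ i, if a = g i then 1 else 0 := by
  induction n with
  | zero => simp
  | succ n ih =>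
    rw [List.ofFn_succ,
      show ((g 0 :: List.ofFn fun i => g i.succ : List α) : Multiset α)
        = g 0 ::ₘ ((List.ofFn fun i => g i.succ : List α) : Multiset α) from rfl,
      Multiset.count_cons, ih (fun i => g i.succ), Fin.sum_univ_succ, add_comm]

lemma sum_pair_fst {X Y : Type*} [Fintype Y] [DecidableEq X] [DecidableEq Y]
    (x₀ a : X) (z : Y) :
    ∑ y : Y, (if (x₀, y) = (a, z) then (1:ℝ) else 0) = if x₀ = a then 1 else 0 := by
  by_cases h : x₀ = a
  · subst h; simp [Prod.ext_iff]
  · simp [Prod.ext_iff, h]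

lemma sum_pair_snd {X Y : Type*} [Fintype X] [DecidableEq X] [DecidableEq Y]
    (y₀ : Y) (a : X) (z : Y) :
    ∑ x : X, (if (x, y₀) = (a, z) then (1:ℝ) else 0) = if y₀ = z then 1 else 0 := by
  by_cases h : y₀ = z
  · subst h; simp [Prod.ext_iff]
  · simp [Prod.ext_iff, h]

/-- If γ is the unique maximizer of the optimal transport problem over distributions with
the same marginals, then the support of γ is strictly u-cyclically monotone. -/
theorem stmt1 {X Y : Type*} [Fintype X] [Fintype Y]
    (u : X → Y → ℝ) (γ : X × Y → ℝ) (hγ : IsDist γ)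
    (hmax : ∀ γ' : X × Y → ℝ, IsDist γ' →
      (∀ x, ∑ y, γ' (x, y) = ∑ y, γ (x, y)) →
      (∀ y, ∑ x, γ' (x, y) = ∑ x, γ (x, y)) →
      γ' ≠ γ →
      ∑ p : X × Y, u p.1 p.2 * γ' p < ∑ p : X × Y, u p.1 p.2 * γ p) :
    StrictCycMono u {p : X × Y | 0 < γ p} := by
  classical
  intro N x y hS hne
  have hNpos : 0 < N := by
    rcases Nat.eq_zero_or_pos N with h | h
    · subst h; simp at hne
    · exact h
  have hNe : Nonempty (Fin N) := ⟨⟨0, hNpos⟩⟩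
  set c1 : Fin N → X × Y := fun i => (x i, y i) with hc1
  set c2 : Fin N → X × Y := fun i => (x i, y (finRotate N i)) with hc2
  let cnt1 : X × Y → ℝ := fun p => ∑ i, if p = c1 i then (1:ℝ) else 0
  let cnt2 : X × Y → ℝ := fun p => ∑ i, if p = c2 i then (1:ℝ) else 0
  let f : X × Y → ℝ := fun p => cnt2 p - cnt1 p
  have hfdef : ∀ p, f p = (∑ i, if p = c2 i then (1:ℝ) else 0)
      - ∑ i, if p = c1 i then (1:ℝ) else 0 := fun p => rfl
  set m : ℝ := Finset.univ.inf' (Finset.univ_nonempty) (fun i => γ (c1 i)) with hm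
  have hmpos : 0 < m := by
    rw [hm, Finset.lt_inf'_iff]
    exact fun i _ => hS i
  set ε : ℝ := m / N with hε
  have hεpos : 0 < ε := div_pos hmpos (by exact_mod_cast hNpos)
  have hεN : ε * N = m := by
    rw [hε]; field_simp
  set γ' : X × Y → ℝ := fun p => γ p + ε * f p with hγ'
  have hγ'def : ∀ p, γ' p = γ p + ε * (cnt2 p - cnt1 p) := fun p => rfl
  have hcnt1_nonneg : ∀ p, 0 ≤ cnt1 p := fun p =>
    Finset.sum_nonneg fun i _ => by positivity
  have hcnt2_nonneg : ∀ p, 0 ≤ cnt2 p := fun p =>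
    Finset.sum_nonneg fun i _ => by positivity
  have hcnt1_le : ∀ p, cnt1 p ≤ N := by
    intro p
    calc cnt1 p ≤ ∑ _i : Fin N, (1:ℝ) := Finset.sum_le_sum fun i _ => by split <;> norm_num
    _ = N := by simp
  -- nonnegativity of γ'
  have hγ'_nonneg : ∀ p, 0 ≤ γ' p := by
    intro p
    rw [hγ'def p]
    by_cases hfp : cnt1 p ≤ cnt2 p
    · have h1 := hγ.1 p
      have h2 : 0 ≤ ε * (cnt2 p - cnt1 p) := mul_nonneg hεpos.le (by linarith)
      linarith
    · push_neg at hfp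
      have hc1pos : 0 < cnt1 p := lt_of_le_of_lt (hcnt2_nonneg p) hfp
      have hex : ∃ j, p = c1 j := by
        by_contra hcon
        push_neg at hcon
        have : cnt1 p = 0 := Finset.sum_eq_zero fun i _ => by simp [hcon i]
        linarith
      obtain ⟨j, hj⟩ := hex
      have hγp : m ≤ γ p := by
        rw [hj, hm]
        exact Finset.inf'_le _ (Finset.mem_univ j)
      have h3 : ε * cnt2 p ≥ 0 := mul_nonneg hεpos.le (hcnt2_nonneg p)
      have h4 : ε * cnt1 p ≤ ε * N := mul_le_mul_of_nonneg_left (hcnt1_le p) hεpos.le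
      rw [mul_sub]
      linarith
  -- sum of indicator functions
  have hsum_ind : ∀ (c : Fin N → X × Y),
      ∑ p : X × Y, ∑ i, (if p = c i then (1:ℝ) else 0) = N := by
    intro c
    rw [Finset.sum_comm]
    have h1 : ∀ i : Fin N, ∑ p : X × Y, (if p = c i then (1:ℝ) else 0) = 1 := by
      intro i; simp [Finset.sum_ite_eq']
    simp [h1]
  have hsumf : ∑ p : X × Y, f p = 0 := by
    rw [Finset.sum_congr rfl fun p _ => hfdef p, Finset.sum_sub_distrib,
      hsum_ind c1, hsum_ind c2, sub_self]
  -- γ' is a distribution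
  have hγ'dist : IsDist γ' := by
    refine ⟨hγ'_nonneg, ?_⟩
    have : ∑ p : X × Y, γ' p = ∑ p : X × Y, γ p + ε * ∑ p : X × Y, f p := by
      rw [Finset.mul_sum, ← Finset.sum_add_distrib]
    rw [this, hsumf, mul_zero, add_zero, hγ.2]
  -- marginal computations
  have doub_fst : ∀ (c : Fin N → X × Y) (x₀ : X),
      ∑ y₀ : Y, (∑ i, if (x₀, y₀) = c i then (1:ℝ) else 0)
        = ∑ i, if x₀ = (c i).1 then (1:ℝ) else 0 := by
    intro c x₀
    rw [Finset.sum_comm]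
    refine Finset.sum_congr rfl fun i _ => ?_
    simpa using sum_pair_fst x₀ (c i).1 (c i).2
  have doub_snd : ∀ (c : Fin N → X × Y) (y₀ : Y),
      ∑ x₀ : X, (∑ i, if (x₀, y₀) = c i then (1:ℝ) else 0)
        = ∑ i, if y₀ = (c i).2 then (1:ℝ) else 0 := by
    intro c y₀
    rw [Finset.sum_comm]
    refine Finset.sum_congr rfl fun i _ => ?_
    simpa using sum_pair_snd y₀ (c i).1 (c i).2
  have hmarg1 : ∀ x₀, ∑ y₀, γ' (x₀, y₀) = ∑ y₀, γ (x₀, y₀) := by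
    intro x₀
    have hstep : ∑ y₀, γ' (x₀, y₀)
        = ∑ y₀, γ (x₀, y₀) + ε * ∑ y₀, f (x₀, y₀) := by
      rw [Finset.mul_sum, ← Finset.sum_add_distrib]
    have hfz : ∑ y₀, f (x₀, y₀) = 0 := by
      rw [Finset.sum_congr rfl fun y₀ _ => hfdef (x₀, y₀), Finset.sum_sub_distrib,
        doub_fst c1 x₀, doub_fst c2 x₀, sub_self]
    rw [hstep, hfz, mul_zero, add_zero]
  have hmarg2 : ∀ y₀, ∑ x₀, γ' (x₀, y₀) = ∑ x₀, γ (x₀, y₀) := by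
    intro y₀
    have hstep : ∑ x₀, γ' (x₀, y₀)
        = ∑ x₀, γ (x₀, y₀) + ε * ∑ x₀, f (x₀, y₀) := by
      rw [Finset.mul_sum, ← Finset.sum_add_distrib]
    have hfz : ∑ x₀, f (x₀, y₀) = 0 := by
      rw [Finset.sum_congr rfl fun x₀ _ => hfdef (x₀, y₀), Finset.sum_sub_distrib,
        doub_snd c1 y₀, doub_snd c2 y₀]
      have : ∑ i, (if y₀ = (c2 i).2 then (1:ℝ) else 0)
          = ∑ i, (if y₀ = (c1 i).2 then (1:ℝ) else 0) := by
        simpa [hc1, hc2] using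
          Equiv.sum_comp (finRotate N) (fun j => if y₀ = y j then (1:ℝ) else 0)
      rw [this, sub_self]
    rw [hstep, hfz, mul_zero, add_zero]
  -- γ' ≠ γ
  have hγ'ne : γ' ≠ γ := by
    intro heq
    apply hne
    ext p
    rw [cnt_ofFnM c1 p, cnt_ofFnM c2 p]
    have hfp : cnt2 p - cnt1 p = 0 := by
      have h := congrFun heq p
      rw [hγ'def p] at h
      have h2 : ε * (cnt2 p - cnt1 p) = 0 := by linarith
      rcases mul_eq_zero.1 h2 with h3 | h3
      · exact absurd h3 (ne_of_gt hεpos)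
      · exact h3
    have hr : (∑ i, if p = c1 i then (1:ℝ) else 0) = ∑ i, if p = c2 i then (1:ℝ) else 0 := by
      have := hfdef p; simp only [cnt1, cnt2] at hfp; linarith [hfdef p]
    have hcast : ((∑ i, if p = c1 i then (1:ℕ) else 0 : ℕ) : ℝ)
        = ((∑ i, if p = c2 i then (1:ℕ) else 0 : ℕ) : ℝ) := by
      push_cast
      simpa [apply_ite (fun n : ℕ => (n : ℝ))] using hr
    exact_mod_cast hcast
  -- apply the maximality hypothesis
  have hkey := hmax γ' hγ'dist hmarg1 hmarg2 hγ'ne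
  have hexp : ∑ p : X × Y, u p.1 p.2 * γ' p =
      ∑ p : X × Y, u p.1 p.2 * γ p + ε * ∑ p : X × Y, u p.1 p.2 * f p := by
    rw [Finset.mul_sum, ← Finset.sum_add_distrib]
    refine Finset.sum_congr rfl fun p _ => ?_
    rw [hγ'def p, hfdef p]
    ring
  have key : ∀ (c : Fin N → X × Y),
      ∑ p : X × Y, u p.1 p.2 * (∑ i, if p = c i then (1:ℝ) else 0)
        = ∑ i, u (c i).1 (c i).2 := by
    intro c
    have h1 : ∀ p : X × Y, u p.1 p.2 * (∑ i, if p = c i then (1:ℝ) else 0)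
        = ∑ i, (if p = c i then u p.1 p.2 else 0) := by
      intro p
      rw [Finset.mul_sum]
      exact Finset.sum_congr rfl fun i _ => by split <;> ring
    rw [Finset.sum_congr rfl fun p _ => h1 p, Finset.sum_comm]
    refine Finset.sum_congr rfl fun i _ => ?_
    have h2 : ∀ p : X × Y, (if p = c i then u p.1 p.2 else 0)
        = (if p = c i then u (c i).1 (c i).2 else 0) := by
      intro p; split <;> simp_all
    rw [Finset.sum_congr rfl fun p _ => h2 p]
    simp [Finset.sum_ite_eq']
  have hsumuf : ∑ p : X × Y, u p.1 p.2 * f p =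
      (∑ i, u (x i) (y (finRotate N i))) - ∑ i, u (x i) (y i) := by
    have : ∑ p : X × Y, u p.1 p.2 * f p
        = ∑ p : X × Y, (u p.1 p.2 * (∑ i, if p = c2 i then (1:ℝ) else 0)
          - u p.1 p.2 * (∑ i, if p = c1 i then (1:ℝ) else 0)) := by
      refine Finset.sum_congr rfl fun p _ => ?_
      rw [hfdef p]; ring
    rw [this, Finset.sum_sub_distrib, key c1, key c2]
  rw [hexp, hsumuf] at hkey
  nlinarith [hkey, hεpos]
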